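/- Let F(θ,x) = (θ + ω, f(θ,x)) be a quasiperiodic skew product of Ω = S¹ × I with ω irrational, and let PC be a pseudo-curve with F(PC) ⊆ PC. Then PC is strongly F-invariant, F(PC) = PC, and PC is minimal: every nonempty closed set B ⊆ PC with F(B) ⊆ B equals PC. -/

import Mathlib

open Set

/-- The graph of `φ` over `G`. -/
def graphOn (G : Set UnitAddCircle) (φ : UnitAddCircle → ℝ) : Set (UnitAddCircle × ℝ) :=
  (fun θ => (θ, φ θ)) '' G

/-- The quasiperiodic skew product `F(θ,x) = (θ + ω, f θ x)`. -/
noncomputable def skewProd (ω : ℝ) (f : UnitAddCircle → ℝ → ℝ) :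
    UnitAddCircle × ℝ → UnitAddCircle × ℝ :=
  fun p => (p.1 + (ω : UnitAddCircle), f p.1 p.2)

open Filter Topology


lemma dense_aux (ω : ℝ) (hω : Irrational ω) :
    Dense ((AddSubgroup.closure {1, ω} : AddSubgroup ℝ) : Set ℝ) := by
  rcases AddSubgroup.dense_or_cyclic (AddSubgroup.closure {1, ω}) with h | ⟨a, ha⟩
  · exact h
  · exfalso
    have h1 : (1:ℝ) ∈ AddSubgroup.closure ({1, ω} : Set ℝ) :=
      AddSubgroup.subset_closure (by simp)
    have h2 : ω ∈ AddSubgroup.closure ({1, ω} : Set ℝ) :=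
      AddSubgroup.subset_closure (by simp)
    rw [ha, AddSubgroup.mem_closure_singleton] at h1 h2
    obtain ⟨m, hm⟩ := h1
    obtain ⟨n, hn⟩ := h2
    rw [zsmul_eq_mul] at hm hn
    have hm0 : (m:ℝ) ≠ 0 := by
      intro h; rw [h, zero_mul] at hm; exact one_ne_zero hm.symm
    have hωm : ω * m = n := by linear_combination (-(m:ℝ)) * hn + (n:ℝ) * hm
    exact hω ⟨(n : ℚ)/(m : ℚ), by push_cast; field_simp; linarith [hωm]⟩

lemma closed_invariant_eq_univ (ω : ℝ) (hω : Irrational ω)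
    (K : Set UnitAddCircle) (hKc : IsClosed K) (hKne : K.Nonempty)
    (hKi : ∀ x ∈ K, x + (ω : UnitAddCircle) ∈ K) : K = univ := by
  set ωc : UnitAddCircle := (ω : UnitAddCircle) with hωc
  -- the decreasing sequence of translates
  set Kn : ℕ → Set UnitAddCircle := fun n => (fun x => x + n • ωc) '' K with hKn
  have hKn0 : Kn 0 = K := by simp [hKn]
  have hKnc : ∀ n, IsClosed (Kn n) := fun n =>
    (Homeomorph.addRight (n • ωc)).isClosedMap _ hKc
  have hKnne : ∀ n, (Kn n).Nonempty := fun n => hKne.image _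
  have hKsub : ∀ n, Kn (n + 1) ⊆ Kn n := by
    rintro n _ ⟨x, hx, rfl⟩
    exact ⟨x + ωc, hKi x hx, by rw [succ_nsmul']; abel⟩
  set Ki : Set UnitAddCircle := ⋂ n, Kn n with hKi'
  have hKine : Ki.Nonempty := by
    apply IsCompact.nonempty_iInter_of_sequence_nonempty_isCompact_isClosed Kn hKsub hKnne
    · exact (hKnc 0).isCompact
    · exact hKnc
  have hKic : IsClosed Ki := isClosed_iInter hKnc
  -- Ki is invariant both ways
  have hstep : ∀ x ∈ Ki, x + ωc ∈ Ki := by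
    intro x hx
    rw [hKi', mem_iInter] at hx ⊢
    intro n
    cases n with
    | zero =>
      have h1 : x ∈ K := by
        have := hx 1
        simp only [hKn, one_nsmul] at this
        obtain ⟨y, hy, rfl⟩ := this
        exact hKi y hy
      simpa [hKn] using hKi x h1
    | succ m =>
      obtain ⟨y, hy, rfl⟩ := hx m
      exact ⟨y, hy, by beta_reduce; rw [succ_nsmul]; abel⟩
  have hstep' : ∀ x ∈ Ki, x - ωc ∈ Ki := by
    intro x hx
    rw [hKi', mem_iInter] at hx ⊢
    intro n
    obtain ⟨y, hy, rfl⟩ := hx (n + 1)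
    exact ⟨y, hy, by beta_reduce; rw [succ_nsmul]; abel⟩
  obtain ⟨k, hk⟩ := hKine
  have horb : ∀ z : ℤ, k + z • ωc ∈ Ki := by
    intro z
    induction z using Int.induction_on with
    | zero => simpa using hk
    | succ n ih =>
      have := hstep _ ih
      convert this using 1
      rw [add_comm (n:ℤ) 1, add_zsmul]
      push_cast
      abel
    | pred n ih =>
      have := hstep' _ ih
      convert this using 1
      rw [sub_zsmul, one_zsmul]
      abel
  -- density of the orbit
  have hDc : IsClosed {x : ℝ | k + (x : UnitAddCircle) ∈ Ki} := by
    have : Continuous fun x : ℝ => k + (x : UnitAddCircle) :=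
      continuous_const.add (AddCircle.continuous_mk' 1)
    exact hKic.preimage this
  have hSsub : ((AddSubgroup.closure {1, ω} : AddSubgroup ℝ) : Set ℝ) ⊆
      {x : ℝ | k + (x : UnitAddCircle) ∈ Ki} := by
    intro s hs
    rw [SetLike.mem_coe, AddSubgroup.mem_closure_pair] at hs
    obtain ⟨m, n, rfl⟩ := hs
    show k + ((m • (1:ℝ) + n • ω : ℝ) : UnitAddCircle) ∈ Ki
    have : ((m • (1:ℝ) + n • ω : ℝ) : UnitAddCircle) = n • ωc := by
      rw [AddCircle.coe_add, AddCircle.coe_zsmul, AddCircle.coe_zsmul,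
        AddCircle.coe_period, smul_zero, zero_add, hωc]
    rw [this]
    exact horb n
  have hDuniv : {x : ℝ | k + (x : UnitAddCircle) ∈ Ki} = univ := by
    have := (dense_aux ω hω).mono hSsub
    exact hDc.closure_eq ▸ this.closure_eq
  have hKiuniv : Ki = univ := by
    apply eq_univ_of_forall
    intro c
    obtain ⟨x, hx⟩ := QuotientAddGroup.mk_surjective (c - k)
    have : k + (x : UnitAddCircle) ∈ Ki := by
      rw [eq_univ_iff_forall] at hDuniv; exact hDuniv x
    rwa [hx, add_sub_cancel] at this
  have : Ki ⊆ K := hKn0 ▸ iInter_subset Kn 0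
  rw [hKiuniv] at this
  exact eq_univ_of_univ_subset this



lemma fiber_lemma (G : Set UnitAddCircle) (φ : UnitAddCircle → ℝ)
    (hφc : ContinuousOn φ G) {θ : UnitAddCircle} (hθ : θ ∈ G) {x : ℝ}
    (hx : (θ, x) ∈ closure ((fun t => (t, φ t)) '' G)) : x = φ θ := by
  rw [mem_closure_iff_seq_limit] at hx
  obtain ⟨u, hu, hlim⟩ := hx
  have h1 : ∀ n, (u n).1 ∈ G ∧ (u n).2 = φ (u n).1 := by
    intro n
    obtain ⟨t, ht, he⟩ := hu n
    rw [← he]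
    exact ⟨ht, rfl⟩
  have hfst : Tendsto (fun n => (u n).1) atTop (𝓝 θ) :=
    ((continuous_fst.tendsto _).comp hlim)
  have hsnd : Tendsto (fun n => (u n).2) atTop (𝓝 x) :=
    ((continuous_snd.tendsto _).comp hlim)
  have hfstG : Tendsto (fun n => (u n).1) atTop (𝓝[G] θ) :=
    tendsto_nhdsWithin_of_tendsto_nhds_of_eventually_within _ hfst
      (Eventually.of_forall fun n => (h1 n).1)
  have hφlim : Tendsto (fun n => φ (u n).1) atTop (𝓝 (φ θ)) :=
    (hφc θ hθ).tendsto.comp hfstG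
  have : (fun n => (u n).2) = fun n => φ (u n).1 := funext fun n => (h1 n).2
  rw [this] at hsnd
  exact tendsto_nhds_unique hsnd hφlim

/-- If a pseudo-curve `PC` is invariant (`F(PC) ⊆ PC`) under a
quasiperiodic skew product `F`, then it is strongly invariant (`F(PC) = PC`) and
minimal: every nonempty closed `F`-invariant subset of `PC` equals `PC`. -/
theorem statement6 (a b : ℝ) (hab : a ≤ b) (ω : ℝ) (hω : Irrational ω)
    (f : UnitAddCircle → ℝ → ℝ)
    (hf : ContinuousOn (fun p : UnitAddCircle × ℝ => f p.1 p.2) (univ ×ˢ Icc a b))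
    (hmaps : ∀ θ, ∀ x ∈ Icc a b, f θ x ∈ Icc a b)
    (G : Set UnitAddCircle) (hG : G ∈ residual UnitAddCircle)
    (φ : UnitAddCircle → ℝ) (hφc : ContinuousOn φ G) (hφI : ∀ θ ∈ G, φ θ ∈ Icc a b)
    (hinv : skewProd ω f '' closure (graphOn G φ) ⊆ closure (graphOn G φ)) :
    skewProd ω f '' closure (graphOn G φ) = closure (graphOn G φ) ∧
    ∀ B ⊆ closure (graphOn G φ), B.Nonempty → IsClosed B →
      skewProd ω f '' B ⊆ B → B = closure (graphOn G φ) := by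
  set PC := closure (graphOn G φ) with hPC
  have hgsub : graphOn G φ ⊆ univ ×ˢ Icc a b := by
    rintro _ ⟨θ, hθ, rfl⟩
    exact ⟨trivial, hφI θ hθ⟩
  have hsub : PC ⊆ univ ×ˢ Icc a b :=
    closure_minimal hgsub (isClosed_univ.prod isClosed_Icc)
  have hPCcomp : IsCompact PC :=
    (isCompact_univ.prod isCompact_Icc).of_isClosed_subset isClosed_closure hsub
  have hGdense : Dense G := dense_of_mem_residual hG
  have hGne : G.Nonempty := hGdense.nonempty
  have hPCne : PC.Nonempty := by
    obtain ⟨θ0, hθ0⟩ := hGne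
    exact ⟨(θ0, φ θ0), subset_closure ⟨θ0, hθ0, rfl⟩⟩
  -- minimality
  have hmin : ∀ B ⊆ PC, B.Nonempty → IsClosed B → skewProd ω f '' B ⊆ B → B = PC := by
    intro B hBsub hBne hBc hBi
    have hBcomp : IsCompact B := hPCcomp.of_isClosed_subset hBc hBsub
    set K := Prod.fst '' B with hK
    have hKc : IsClosed K := (hBcomp.image continuous_fst).isClosed
    have hKne : K.Nonempty := hBne.image _
    have hKi : ∀ x ∈ K, x + (ω : UnitAddCircle) ∈ K := by
      rintro _ ⟨p, hp, rfl⟩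
      exact ⟨skewProd ω f p, hBi ⟨p, hp, rfl⟩, rfl⟩
    have hKuniv : K = univ := closed_invariant_eq_univ ω hω K hKc hKne hKi
    have hgB : graphOn G φ ⊆ B := by
      rintro _ ⟨θ, hθ, rfl⟩
      have : θ ∈ K := hKuniv ▸ mem_univ θ
      obtain ⟨p, hp, hp1⟩ := this
      have hpPC : p ∈ PC := hBsub hp
      have hp2 : p.2 = φ θ := by
        apply fiber_lemma G φ hφc hθ
        have : p = (θ, p.2) := by rw [← hp1]
        rw [← this]
        exact hpPC
      have heq : p = (θ, φ θ) := Prod.ext hp1 hp2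
      show (θ, φ θ) ∈ B
      rw [← heq]; exact hp
    exact le_antisymm hBsub (closure_minimal hgB hBc)
  refine ⟨?_, hmin⟩
  -- strong invariance
  have hFc : ContinuousOn (skewProd ω f) (univ ×ˢ Icc a b) := by
    apply ContinuousOn.prodMk
    · exact (continuous_fst.add continuous_const).continuousOn
    · exact hf
  have hBcomp : IsCompact (skewProd ω f '' PC) :=
    hPCcomp.image_of_continuousOn (hFc.mono hsub)
  exact hmin _ hinv (hPCne.image _) hBcomp.isClosed
    (image_mono (f := skewProd ω f) hinv)
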